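/- For any properly distributed bounded real sequence x, there exists a sequence {s_k} of simply distributed bounded real sequences such that ‖s_k − x‖_∞ → 0 as k → ∞ (indeed one can choose s_k with ‖s_k − x‖_∞ < 1/k). -/

import Mathlib

open Filter

/-- A bounded real sequence. -/
def IsBddSeq (x : ℕ → ℝ) : Prop := ∃ C : ℝ, ∀ n, |x n| ≤ C

/-- The sup norm of a (bounded) real sequence. -/
noncomputable def supNorm (x : ℕ → ℝ) : ℝ := ⨆ n, |x n|

/-- A Banach limit: a linear functional on the space of bounded real sequences
(extended arbitrarily to all sequences) that is positive, shift-invariant,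
and sends the constant-one sequence to `1`. -/
def IsBanachLimit (L : (ℕ → ℝ) → ℝ) : Prop :=
  (∀ x y : ℕ → ℝ, IsBddSeq x → IsBddSeq y → L (x + y) = L x + L y) ∧
  (∀ (c : ℝ) (x : ℕ → ℝ), IsBddSeq x → L (c • x) = c * L x) ∧
  (∀ x : ℕ → ℝ, IsBddSeq x → (∀ n, 0 ≤ x n) → 0 ≤ L x) ∧
  (∀ x : ℕ → ℝ, IsBddSeq x → L (fun n => x (n + 1)) = L x) ∧
  L (fun _ => 1) = 1

/-- A bounded sequence is almost convergent if all Banach limits agree on it. -/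
def AlmostConvergent (x : ℕ → ℝ) : Prop :=
  ∃ c : ℝ, ∀ L : (ℕ → ℝ) → ℝ, IsBanachLimit L → L x = c

/-- `a` is a sub-limit of `x` if some subsequence of `x` converges to `a`. -/
def IsSubLimit (x : ℕ → ℝ) (a : ℝ) : Prop :=
  ∃ n : ℕ → ℕ, StrictMono n ∧ Tendsto (fun k => x (n k)) atTop (nhds a)

/-- The set of all sub-limits of `x`. -/
def subLimitSet (x : ℕ → ℝ) : Set ℝ := {a | IsSubLimit x a}

/-- `A({k : i ≤ n_k ≤ i + len - 1})`: the number of indices of the subsequence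
given by `n` falling in the window `[i, i + len - 1]`. -/
noncomputable def windowCount (n : ℕ → ℕ) (i len : ℕ) : ℕ :=
  {k : ℕ | i ≤ n k ∧ n k < i + len}.ncard

/-- Upper weight of a subsequence with index map `n`. -/
noncomputable def upperWeight (n : ℕ → ℕ) : ℝ :=
  limsup (fun len : ℕ => ⨆ i : ℕ, (windowCount n i len : ℝ) / len) atTop

/-- Lower weight of a subsequence with index map `n`. -/
noncomputable def lowerWeight (n : ℕ → ℕ) : ℝ :=
  liminf (fun len : ℕ => ⨅ i : ℕ, (windowCount n i len : ℝ) / len) atTop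

/-- `n` indexes an essential subsequence of `x` for the sub-limit `a`:
it converges to `a` and every subsequence of `x` converging to `a` has all
but finitely many of its indices among the `n k`. -/
def IsEssentialSubseq (x : ℕ → ℝ) (a : ℝ) (n : ℕ → ℕ) : Prop :=
  StrictMono n ∧ Tendsto (fun k => x (n k)) atTop (nhds a) ∧
  ∀ m : ℕ → ℕ, StrictMono m → Tendsto (fun t => x (m t)) atTop (nhds a) →
    {t : ℕ | ¬ ∃ k, n k = m t}.Finite

/-- The weight `w(a)` of a sub-limit `a` of `x` exists and equals `w`:
some essential subsequence of `a` has upper weight and lower weight both `w`. -/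
def HasSubLimitWeight (x : ℕ → ℝ) (a : ℝ) (w : ℝ) : Prop :=
  ∃ n : ℕ → ℕ, IsEssentialSubseq x a n ∧ upperWeight n = w ∧ lowerWeight n = w

/-- `A({k : x(k+i) ∈ S, k = 0, …, len-1})`. -/
noncomputable def seqCount (x : ℕ → ℝ) (S : Set ℝ) (i len : ℕ) : ℕ :=
  {k : ℕ | k < len ∧ x (k + i) ∈ S}.ncard

/-- The weight of `x` with respect to `S` exists and equals `w`:
`A({k : x(k+i) ∈ S, k = 0,…,n-1})/n → w` as `n → ∞`, uniformly in `i`. -/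
def HasSetWeight (x : ℕ → ℝ) (S : Set ℝ) (w : ℝ) : Prop :=
  ∀ ε : ℝ, 0 < ε → ∃ N : ℕ, ∀ n ≥ N, ∀ i : ℕ,
    |(seqCount x S i n : ℝ) / n - w| < ε

/-- `x` is properly distributed: every Borel subset of `[-‖x‖∞, ‖x‖∞]`
has a weight with respect to `x`. -/
def ProperlyDistributed (x : ℕ → ℝ) : Prop :=
  ∀ S : Set ℝ, MeasurableSet S → S ⊆ Set.Icc (-(supNorm x)) (supNorm x) →
    ∃ w : ℝ, HasSetWeight x S w

/-- `s` is simply distributed: it takes finitely many values, and each value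
has a weight with respect to `s`. -/
def SimplyDistributed (s : ℕ → ℝ) : Prop :=
  (Set.range s).Finite ∧ ∀ a ∈ Set.range s, ∃ w : ℝ, HasSetWeight s {a} w

lemma abs_le_supNorm (x : ℕ → ℝ) (hx : IsBddSeq x) (n : ℕ) : |x n| ≤ supNorm x := by
  obtain ⟨C, hC⟩ := hx
  exact le_ciSup ⟨C, fun r ⟨m, hm⟩ => hm ▸ hC m⟩ n

lemma apx_key (x : ℕ → ℝ) (hx : IsBddSeq x) (hpd : ProperlyDistributed x) (k : ℕ)
    (hk : 1 ≤ k) :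
    SimplyDistributed (fun n => (⌊x n * (2*k)⌋ : ℝ) / (2*k)) ∧
    supNorm (fun n => (⌊x n * (2*k)⌋ : ℝ) / (2*k) - x n) ≤ 1/(2*k) := by
  set M := supNorm x with hM
  have hxM : ∀ n, |x n| ≤ M := abs_le_supNorm x hx
  have hm : (0:ℝ) < 2*k := by positivity
  constructor
  · constructor
    · -- finite range
      apply Set.Finite.subset (Set.Finite.image (fun j : ℤ => (j:ℝ)/(2*k))
        (Set.finite_Icc ⌊-(M*(2*k))⌋ ⌊M*(2*k)⌋))
      rintro _ ⟨n, rfl⟩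
      refine ⟨⌊x n * (2*k)⌋, ⟨?_, ?_⟩, rfl⟩
      · apply Int.floor_le_floor
        nlinarith [neg_abs_le (x n), hxM n]
      · apply Int.floor_le_floor
        nlinarith [le_abs_self (x n), hxM n]
    · rintro a ⟨n0, rfl⟩
      set j := ⌊x n0 * (2*k)⌋ with hj
      set S : Set ℝ := Set.Ico ((j:ℝ)/(2*k)) (((j:ℝ)+1)/(2*k)) ∩ Set.Icc (-M) M with hS
      obtain ⟨w, hw⟩ := hpd S (by measurability) Set.inter_subset_right
      refine ⟨w, ?_⟩
      have hcount : ∀ i len, seqCount (fun n => (⌊x n * (2*k)⌋ : ℝ) / (2*k))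
          {(⌊x n0 * (2*k)⌋ : ℝ) / (2*k)} i len = seqCount x S i len := by
        intro i len
        unfold seqCount
        congr 1
        ext m
        simp only [Set.mem_setOf_eq, Set.mem_singleton_iff, and_congr_right_iff]
        intro _
        constructor
        · intro h
          have hj' : ⌊x (m+i) * (2*k)⌋ = j := by
            rw [hj]; rw [div_left_inj' (ne_of_gt hm)] at h; exact_mod_cast h
          constructor
          · constructor
            · rw [div_le_iff₀ hm]
              rw [← hj']
              exact Int.floor_le _
            · rw [lt_div_iff₀ hm]
              rw [← hj']
              push_cast
              exact Int.lt_floor_add_one _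
          · exact abs_le.mp (hxM (m+i))
        · rintro ⟨⟨h1, h2⟩, _⟩
          have : ⌊x (m+i) * (2*k)⌋ = j := by
            rw [Int.floor_eq_iff]
            constructor
            · rw [div_le_iff₀ hm] at h1; linarith
            · rw [lt_div_iff₀ hm] at h2; push_cast; linarith
          rw [this]
      intro ε hε
      obtain ⟨N, hN⟩ := hw ε hε
      exact ⟨N, fun n hn i => by rw [hcount]; exact hN n hn i⟩
  · apply Real.iSup_le _ (by positivity)
    intro n
    have h1 : (⌊x n * (2*k)⌋ : ℝ) ≤ x n * (2*k) := Int.floor_le _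
    have h2 : x n * (2*k) < (⌊x n * (2*k)⌋ : ℝ) + 1 := Int.lt_floor_add_one _
    have e : (⌊x n * (2*k)⌋ : ℝ) / (2*k) - x n
        = ((⌊x n * (2*k)⌋ : ℝ) - x n * (2*k)) / (2*k) := by
      field_simp
    simp only []
    rw [e, abs_div, abs_of_pos hm]
    gcongr
    rw [abs_le]
    constructor <;> linarith

/-- Every properly distributed bounded sequence `x` is the sup-norm limit of a
sequence of simply distributed sequences; indeed one can choose `s k` with
`‖s k - x‖∞ < 1/k`. -/
theorem properlyDistributed_approx_by_simplyDistributed (x : ℕ → ℝ)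
    (hx : IsBddSeq x) (hpd : ProperlyDistributed x) :
    ∃ s : ℕ → ℕ → ℝ, (∀ k, SimplyDistributed (s k)) ∧
      (∀ k : ℕ, 0 < k → supNorm (fun n => s k n - x n) < 1 / k) ∧
      Filter.Tendsto (fun k => supNorm (fun n => s k n - x n))
        Filter.atTop (nhds 0) := by
  refine ⟨fun k n => (⌊x n * (2*(max k 1))⌋ : ℝ) / (2*(max k 1)), ?_, ?_, ?_⟩
  · intro k
    exact (apx_key x hx hpd (max k 1) (le_max_right _ _)).1
  · intro k hk
    have h := (apx_key x hx hpd (max k 1) (le_max_right _ _)).2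
    rw [max_eq_left hk] at h
    have hk' : (0:ℝ) < k := by exact_mod_cast hk
    simp only [max_eq_left (show 1 ≤ k from hk)]
    calc supNorm (fun n => (⌊x n * (2*k)⌋ : ℝ) / (2*k) - x n) ≤ 1/(2*k) := h
      _ < 1/k := by
        apply one_div_lt_one_div_of_lt hk'
        linarith
  · apply squeeze_zero' (g := fun k : ℕ => 1/(k:ℝ))
    · filter_upwards with k
      exact Real.iSup_nonneg (fun n => abs_nonneg _)
    · filter_upwards [eventually_ge_atTop 1] with k hk
      have h := (apx_key x hx hpd (max k 1) (le_max_right _ _)).2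
      rw [max_eq_left hk] at h
      have hk' : (0:ℝ) < k := by exact_mod_cast hk
      simp only [max_eq_left hk]
      calc supNorm (fun n => (⌊x n * (2*k)⌋ : ℝ) / (2*k) - x n) ≤ 1/(2*k) := h
        _ ≤ 1/k := by
          apply one_div_le_one_div_of_le hk'
          linarith
    · exact tendsto_one_div_atTop_nhds_zero_nat
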